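/- All maximal-dimensional simplices whose vertices are vertices of the root polytope Q_G of a connected bipartite graph G have the same (|E|+|V|-2)-dimensional volume. -/

import Mathlib

open scoped Classical
set_option synthInstance.maxHeartbeats 1000000
set_option maxHeartbeats 1600000

/-- The bipartite graph on vertex set `E ⊕ V` determined by a set of edges
`edges ⊆ E × V` (each pair `(e, v)` is an edge `ev`). -/
def biGraph {E V : Type} (edges : Set (E × V)) : SimpleGraph (E ⊕ V) :=
  SimpleGraph.fromRel (fun a b => ∃ p ∈ edges, a = Sum.inl p.1 ∧ b = Sum.inr p.2)

/-- The point `𝐞 + 𝐯` of `ℝ^E ⊕ ℝ^V` corresponding to an edge `ev`. -/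
noncomputable def rootPt (E V : Type) (p : E × V) : (E → ℝ) × (V → ℝ) :=
  (Pi.single p.1 1, Pi.single p.2 1)

/-- The root polytope of the bipartite graph with edge set `edges`. -/
noncomputable def rootPolytope {E V : Type} (edges : Set (E × V)) :
    Set ((E → ℝ) × (V → ℝ)) :=
  convexHull ℝ (rootPt E V '' edges)

open MeasureTheory

section Aux

variable {E V : Type} [Fintype E] [Fintype V]

/-- Every edge vector `rootPt q - p` lies in the integer span (additive subgroup
closure) of the translated simplex vertices, by connectivity of the graph. -/
lemma key_int (edges : Set (E × V)) (hconn : (biGraph edges).Connected)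
    (S : Set ((E → ℝ) × (V → ℝ))) (hS : S ⊆ rootPt E V '' edges)
    (hsp : affineSpan ℝ S = affineSpan ℝ (rootPt E V '' edges))
    (p : (E → ℝ) × (V → ℝ)) (hp : p ∈ S) :
    ∀ q ∈ edges, rootPt E V q - p ∈ AddSubgroup.closure ((fun x => x - p) '' S) := by
  classical
  obtain ⟨t₀, ht₀e, ht₀⟩ := hS hp
  set M := AddSubgroup.closure ((fun x => x - p) '' S) with hM
  have hsplit : ∀ t : E × V, rootPt E V t - p =
      ((Pi.single t.1 1 - Pi.single t₀.1 1, 0) : (E → ℝ) × (V → ℝ)) +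
      ((0, Pi.single t.2 1 - Pi.single t₀.2 1) : (E → ℝ) × (V → ℝ)) := by
    intro t
    rw [← ht₀]
    simp [rootPt, Prod.ext_iff]
  set c : E ⊕ V → Prop := fun x =>
    match x with
    | .inl e => ((Pi.single e 1 - Pi.single t₀.1 1, 0) : (E → ℝ) × (V → ℝ)) ∈ M
    | .inr v => ((0, Pi.single v 1 - Pi.single t₀.2 1) : (E → ℝ) × (V → ℝ)) ∈ M
    with hc
  have hbase : c (Sum.inl t₀.1) := by
    show ((Pi.single t₀.1 1 - Pi.single t₀.1 1, 0) : (E → ℝ) × (V → ℝ)) ∈ M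
    simp [Prod.ext_iff]
    exact zero_mem M
  have hSEquiv : ∀ t : E × V, rootPt E V t ∈ S → (c (Sum.inl t.1) ↔ c (Sum.inr t.2)) := by
    intro t ht
    have hmem : rootPt E V t - p ∈ M :=
      AddSubgroup.subset_closure ⟨rootPt E V t, ht, rfl⟩
    rw [hsplit t] at hmem
    constructor
    · intro h1
      have := AddSubgroup.sub_mem M hmem h1
      simpa using this
    · intro h2
      have := AddSubgroup.sub_mem M hmem h2
      simpa using this
  set CE : Finset E := Finset.univ.filter (fun e => c (Sum.inl e)) with hCE
  set CV : Finset V := Finset.univ.filter (fun v => c (Sum.inr v)) with hCV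
  set φ : (E → ℝ) × (V → ℝ) → ℝ :=
    fun x => (∑ e ∈ CE, x.1 e) - (∑ v ∈ CV, x.2 v) with hφ
  have hφsub : ∀ a b, φ (a - b) = φ a - φ b := by
    intro a b; simp [hφ, Finset.sum_sub_distrib]; ring
  have hφroot : ∀ t : E × V, φ (rootPt E V t) =
      (if c (Sum.inl t.1) then (1:ℝ) else 0) - (if c (Sum.inr t.2) then (1:ℝ) else 0) := by
    intro t
    simp only [hφ, rootPt, Pi.single_apply]
    rw [Finset.sum_ite_eq' CE t.1 (fun _ => (1:ℝ)), Finset.sum_ite_eq' CV t.2 (fun _ => (1:ℝ))]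
    simp [hCE, hCV]
  have hφp : φ p = 0 := by
    rw [← ht₀, hφroot]
    have h2 : c (Sum.inr t₀.2) := (hSEquiv t₀ (by rwa [ht₀])).mp hbase
    simp [hbase, h2]
  have hφW : ∀ w ∈ Submodule.span ℝ ((fun x => x - p) '' S), φ w = 0 := by
    intro w hw
    induction hw using Submodule.span_induction with
    | mem x hx =>
      obtain ⟨y, hy, rfl⟩ := hx
      obtain ⟨t, hte, rfl⟩ := hS hy
      rw [hφsub, hφp, hφroot, sub_zero]
      rw [if_congr (hSEquiv t hy) rfl rfl]
      ring
    | zero => simp [hφ]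
    | add x y _ _ hx hy =>
      have : φ (x + y) = φ x + φ y := by simp [hφ, Finset.sum_add_distrib]; ring
      rw [this, hx, hy, add_zero]
    | smul r x _ hx =>
      have : φ (r • x) = r * φ x := by
        simp only [hφ, Prod.smul_fst, Prod.smul_snd, Pi.smul_apply, smul_eq_mul]
        rw [← Finset.mul_sum, ← Finset.mul_sum]; ring
      rw [this, hx, mul_zero]
  have hmemW : ∀ q ∈ edges, rootPt E V q - p ∈ Submodule.span ℝ ((fun x => x - p) '' S) := by
    intro q hq
    have h1 : rootPt E V q ∈ affineSpan ℝ S := by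
      rw [hsp]; exact subset_affineSpan ℝ _ ⟨q, hq, rfl⟩
    have h2 : p ∈ affineSpan ℝ S := subset_affineSpan ℝ _ hp
    have h3 := AffineSubspace.vsub_mem_direction h1 h2
    rw [direction_affineSpan, vectorSpan_eq_span_vsub_set_right ℝ hp] at h3
    simpa [vsub_eq_sub] using h3
  have hGEquiv : ∀ q ∈ edges, (c (Sum.inl q.1) ↔ c (Sum.inr q.2)) := by
    intro q hq
    have h0 : φ (rootPt E V q - p) = 0 := hφW _ (hmemW q hq)
    rw [hφsub, hφp, sub_zero, hφroot] at h0
    by_cases h1 : c (Sum.inl q.1) <;> by_cases h2 : c (Sum.inr q.2) <;>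
      simp [h1, h2] at h0 ⊢
  have step : ∀ a b : E ⊕ V, (biGraph edges).Adj a b → c a → c b := by
    intro a b hab hca
    rw [biGraph, SimpleGraph.fromRel_adj] at hab
    obtain ⟨-, ⟨q, hq, rfl, rfl⟩ | ⟨q, hq, rfl, rfl⟩⟩ := hab
    · exact (hGEquiv q hq).mp hca
    · exact (hGEquiv q hq).mpr hca
  have hall : ∀ x : E ⊕ V, c x := by
    have hwalk : ∀ {u x : E ⊕ V} (w : (biGraph edges).Walk u x), c u → c x := by
      intro u x w
      induction w with
      | nil => exact id
      | cons h _ ih => exact fun hc => ih (step _ _ h hc)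
    intro x
    exact hwalk ((hconn.preconnected (Sum.inl t₀.1) x).some) hbase
  intro q hq
  rw [hsplit q]
  exact AddSubgroup.add_mem M (hall (Sum.inl q.1)) (hall (Sum.inr q.2))

/-- A maximal affinely independent subset of the root polytope vertices,
translated by one of its points, gives a basis of the direction space. -/
lemma basis_of_simplex (edges : Set (E × V))
    (S : Set ((E → ℝ) × (V → ℝ))) (hS : S ⊆ rootPt E V '' edges)
    (hi : AffineIndependent ℝ ((↑) : S → (E → ℝ) × (V → ℝ)))
    (hsp : affineSpan ℝ S = affineSpan ℝ (rootPt E V '' edges))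
    (p : (E → ℝ) × (V → ℝ)) (hp : p ∈ S) :
    ∃ b : Module.Basis {i : S // i ≠ (⟨p, hp⟩ : S)} ℝ
        (affineSpan ℝ (rootPt E V '' edges)).direction,
      ∀ i, (b i : (E → ℝ) × (V → ℝ)) = (i : S).1 - p := by
  classical
  set W := (affineSpan ℝ (rootPt E V '' edges)).direction with hW
  have li : LinearIndependent ℝ
      (fun i : {i : S // i ≠ (⟨p, hp⟩ : S)} => ((i : S) : (E → ℝ) × (V → ℝ)) - p) := by
    have := (affineIndependent_iff_linearIndependent_vsub ℝ
      ((↑) : S → (E → ℝ) × (V → ℝ)) ⟨p, hp⟩).mp hi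
    simpa [vsub_eq_sub] using this
  have hmem : ∀ x ∈ S, x - p ∈ W := by
    intro x hx
    have h1 : x ∈ affineSpan ℝ S := subset_affineSpan ℝ _ hx
    have h2 : p ∈ affineSpan ℝ S := subset_affineSpan ℝ _ hp
    have := AffineSubspace.vsub_mem_direction h1 h2
    rw [hsp] at this
    simpa [vsub_eq_sub] using this
  set w : {i : S // i ≠ (⟨p, hp⟩ : S)} → W :=
    fun i => ⟨((i : S) : (E → ℝ) × (V → ℝ)) - p, hmem _ (i : S).2⟩ with hw
  have liw : LinearIndependent ℝ w := by
    apply LinearIndependent.of_comp W.subtype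
    exact li
  have hspan : ⊤ ≤ Submodule.span ℝ (Set.range w) := by
    have himg : W.subtype '' Set.range w = (fun x => x -ᵥ p) '' (S \ {p}) := by
      ext y
      constructor
      · rintro ⟨-, ⟨i, rfl⟩, rfl⟩
        exact ⟨(i : S), ⟨(i : S).2, fun h => i.2 (Subtype.ext h)⟩, by simp [hw, vsub_eq_sub]⟩
      · rintro ⟨x, ⟨hx, hxp⟩, rfl⟩
        exact ⟨w ⟨⟨x, hx⟩, fun h => hxp (by simpa using congrArg Subtype.val h)⟩,
          ⟨_, rfl⟩, by simp [hw, vsub_eq_sub]⟩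
    have hmap : Submodule.map W.subtype (Submodule.span ℝ (Set.range w)) = W := by
      rw [Submodule.map_span, himg, ← vectorSpan_eq_span_vsub_set_right_ne ℝ hp,
        ← direction_affineSpan, hsp]
    rw [top_le_iff]
    apply Submodule.map_injective_of_injective W.injective_subtype
    rw [hmap, Submodule.map_top, Submodule.range_subtype]
  refine ⟨Module.Basis.mk liw hspan, ?_⟩
  intro i
  rw [Module.Basis.mk_apply]

/-- Coordinates w.r.t. the simplex basis of any vector in the integer span of
the translated simplex vertices are integers. -/
lemma repr_int (edges : Set (E × V))
    (S : Set ((E → ℝ) × (V → ℝ)))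
    (p : (E → ℝ) × (V → ℝ)) (hp : p ∈ S)
    (hmem : ∀ x ∈ S, x - p ∈ (affineSpan ℝ (rootPt E V '' edges)).direction)
    (b : Module.Basis {i : S // i ≠ (⟨p, hp⟩ : S)} ℝ
        (affineSpan ℝ (rootPt E V '' edges)).direction)
    (hb : ∀ i, (b i : (E → ℝ) × (V → ℝ)) = (i : S).1 - p)
    (u : (affineSpan ℝ (rootPt E V '' edges)).direction)
    (hu : (u : (E → ℝ) × (V → ℝ)) ∈ AddSubgroup.closure ((fun x => x - p) '' S)) :
    ∀ j, ∃ n : ℤ, b.repr u j = n := by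
  classical
  let W := (affineSpan ℝ (rootPt E V '' edges)).direction
  let Bw : Set W := {v : W | (v : (E → ℝ) × (V → ℝ)) ∈ (fun x => x - p) '' S}
  have himg : (W.subtype.toAddMonoidHom : W →+ (E → ℝ) × (V → ℝ)) '' Bw
      = (fun x => x - p) '' S := by
    ext y
    constructor
    · rintro ⟨v, hv, rfl⟩; exact hv
    · rintro ⟨x, hx, rfl⟩
      exact ⟨⟨x - p, hmem x hx⟩, ⟨x, hx, rfl⟩, rfl⟩
  have hu' : u ∈ AddSubgroup.closure Bw := by
    have hcl : AddSubgroup.closure ((fun x => x - p) '' S)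
        = AddSubgroup.map W.subtype.toAddMonoidHom (AddSubgroup.closure Bw) := by
      rw [AddMonoidHom.map_closure, himg]
    rw [hcl] at hu
    obtain ⟨v, hv, hvu⟩ := hu
    have hvu' : (v : (E → ℝ) × (V → ℝ)) = (u : (E → ℝ) × (V → ℝ)) := hvu
    rwa [show v = u from Subtype.ext hvu'] at hv
  refine AddSubgroup.closure_induction (p := fun v _ => ∀ j, ∃ n : ℤ, b.repr v j = n)
    ?_ ?_ ?_ ?_ hu'
  · rintro v ⟨x, hx, hxv⟩ j
    by_cases hxp : x = p
    · have hv0 : v = 0 := by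
        apply Subtype.ext; rw [← hxv, hxp]; simp
      exact ⟨0, by rw [hv0, b.repr.map_zero]; simp⟩
    · have hne : (⟨x, hx⟩ : S) ≠ (⟨p, hp⟩ : S) := fun h => hxp (by simpa using congrArg Subtype.val h)
      have hv : v = b ⟨⟨x, hx⟩, hne⟩ := by
        apply Subtype.ext; rw [← hxv, hb]
      rw [hv, b.repr_self, Finsupp.single_apply]
      by_cases hij : (⟨⟨x, hx⟩, hne⟩ : {i : S // i ≠ (⟨p, hp⟩ : S)}) = j
      · exact ⟨1, by simp [hij]⟩
      · exact ⟨0, by simp [hij]⟩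
  · intro j; exact ⟨0, by rw [b.repr.map_zero]; simp⟩
  · intro v₁ v₂ _ _ h1 h2 j
    obtain ⟨n1, hn1⟩ := h1 j
    obtain ⟨n2, hn2⟩ := h2 j
    exact ⟨n1 + n2, by simp only [map_add, Finsupp.add_apply, hn1, hn2, Int.cast_add]⟩
  · intro v _ h j
    obtain ⟨n, hn⟩ := h j
    exact ⟨-n, by simp only [map_neg, Finsupp.neg_apply, hn, Int.cast_neg]⟩

end Aux
theorem maximal_simplices_equal_volume {E V : Type} [Fintype E] [Fintype V]
    (edges : Set (E × V)) (hconn : (biGraph edges).Connected)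
    (S₁ S₂ : Set ((E → ℝ) × (V → ℝ)))
    (hS₁ : S₁ ⊆ rootPt E V '' edges) (hS₂ : S₂ ⊆ rootPt E V '' edges)
    (hi₁ : AffineIndependent ℝ ((↑) : S₁ → (E → ℝ) × (V → ℝ)))
    (hi₂ : AffineIndependent ℝ ((↑) : S₂ → (E → ℝ) × (V → ℝ)))
    (hsp₁ : affineSpan ℝ S₁ = affineSpan ℝ (rootPt E V '' edges))
    (hsp₂ : affineSpan ℝ S₂ = affineSpan ℝ (rootPt E V '' edges))
    (p₁ : (E → ℝ) × (V → ℝ)) (hp₁ : p₁ ∈ S₁)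
    (p₂ : (E → ℝ) × (V → ℝ)) (hp₂ : p₂ ∈ S₂)
    (μ : Measure (affineSpan ℝ (rootPt E V '' edges)).direction)
    (hμ : μ.IsAddHaarMeasure) :
    μ (Subtype.val ⁻¹' ((fun x => x - p₁) '' convexHull ℝ S₁)) =
      μ (Subtype.val ⁻¹' ((fun x => x - p₂) '' convexHull ℝ S₂)) := by
  classical
  haveI : μ.IsAddHaarMeasure := hμ
  obtain ⟨b₁, hb₁⟩ := basis_of_simplex edges S₁ hS₁ hi₁ hsp₁ p₁ hp₁
  obtain ⟨b₂, hb₂⟩ := basis_of_simplex edges S₂ hS₂ hi₂ hsp₂ p₂ hp₂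
  haveI := FiniteDimensional.fintypeBasisIndex b₁
  haveI := FiniteDimensional.fintypeBasisIndex b₂
  -- membership of translated vertices in the direction space
  have hmem : ∀ (S : Set ((E → ℝ) × (V → ℝ))) (p : (E → ℝ) × (V → ℝ)),
      affineSpan ℝ S = affineSpan ℝ (rootPt E V '' edges) → p ∈ S →
      ∀ x ∈ S, x - p ∈ (affineSpan ℝ (rootPt E V '' edges)).direction := by
    intro S p hsp hp x hx
    have h1 : x ∈ affineSpan ℝ S := subset_affineSpan ℝ _ hx
    have h2 : p ∈ affineSpan ℝ S := subset_affineSpan ℝ _ hp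
    have := AffineSubspace.vsub_mem_direction h1 h2
    rw [hsp] at this
    simpa [vsub_eq_sub] using this
  have hmem₁ := hmem S₁ p₁ hsp₁ hp₁
  have hmem₂ := hmem S₂ p₂ hsp₂ hp₂
  -- every translated vertex of one simplex is in the ℤ-span of the other
  obtain ⟨t₁, ht₁e, ht₁⟩ := hS₁ hp₁
  obtain ⟨t₂, ht₂e, ht₂⟩ := hS₂ hp₂
  have hcross : ∀ x ∈ S₁, x - p₁ ∈ AddSubgroup.closure ((fun y => y - p₂) '' S₂) := by
    intro x hx
    obtain ⟨q, hq, hqx⟩ := hS₁ hx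
    have h1 := key_int edges hconn S₂ hS₂ hsp₂ p₂ hp₂ q hq
    have h2 := key_int edges hconn S₂ hS₂ hsp₂ p₂ hp₂ t₁ ht₁e
    have hxe : x - p₁ = (rootPt E V q - p₂) - (rootPt E V t₁ - p₂) := by
      rw [hqx, ht₁]; ring
    rw [hxe]
    exact AddSubgroup.sub_mem _ h1 h2
  have hcross' : ∀ x ∈ S₂, x - p₂ ∈ AddSubgroup.closure ((fun y => y - p₁) '' S₁) := by
    intro x hx
    obtain ⟨q, hq, hqx⟩ := hS₂ hx
    have h1 := key_int edges hconn S₁ hS₁ hsp₁ p₁ hp₁ q hq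
    have h2 := key_int edges hconn S₁ hS₁ hsp₁ p₁ hp₁ t₂ ht₂e
    have hxe : x - p₂ = (rootPt E V q - p₁) - (rootPt E V t₂ - p₁) := by
      rw [hqx, ht₂]; ring
    rw [hxe]
    exact AddSubgroup.sub_mem _ h1 h2
  -- the comparison linear equivalence
  let e := b₁.indexEquiv b₂
  let b₁' := b₁.reindex e
  have hb₁' : ∀ j, (b₁' j : (E → ℝ) × (V → ℝ)) = ((e.symm j : S₁) : (E → ℝ) × (V → ℝ)) - p₁ := by
    intro j
    show ((b₁.reindex e) j : (E → ℝ) × (V → ℝ)) = _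
    rw [Module.Basis.reindex_apply, hb₁]
  let f := b₂.equiv b₁' (Equiv.refl _)
  have hf : ∀ j, f (b₂ j) = b₁' j := by
    intro j
    simp [f, Module.Basis.equiv_apply]
  have hfsymm : ∀ j, f.symm (b₁' j) = b₂ j := by
    intro j
    have := hf j
    rw [← this, LinearEquiv.symm_apply_apply]
  -- integrality of the two change-of-basis matrices
  have hPint : ∀ i j, ∃ n : ℤ, (LinearMap.toMatrix b₂ b₂ (f : (affineSpan ℝ (rootPt E V '' edges)).direction →ₗ[ℝ] (affineSpan ℝ (rootPt E V '' edges)).direction)) i j = n := by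
    intro i j
    rw [LinearMap.toMatrix_apply]
    have : (f : (affineSpan ℝ (rootPt E V '' edges)).direction →ₗ[ℝ] (affineSpan ℝ (rootPt E V '' edges)).direction) (b₂ j) = b₁' j := hf j
    rw [this]
    refine repr_int edges S₂ p₂ hp₂ hmem₂ b₂ hb₂ (b₁' j) ?_ i
    rw [hb₁' j]
    exact hcross _ (e.symm j : S₁).2
  have hQint : ∀ i j, ∃ n : ℤ, (LinearMap.toMatrix b₁ b₁ (f.symm : (affineSpan ℝ (rootPt E V '' edges)).direction →ₗ[ℝ] (affineSpan ℝ (rootPt E V '' edges)).direction)) i j = n := by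
    intro i j
    rw [LinearMap.toMatrix_apply]
    have hbj : b₁ j = b₁' (e j) := by
      show _ = (b₁.reindex e) (e j)
      rw [Module.Basis.reindex_apply, Equiv.symm_apply_apply]
    have : (f.symm : (affineSpan ℝ (rootPt E V '' edges)).direction →ₗ[ℝ] (affineSpan ℝ (rootPt E V '' edges)).direction) (b₁ j) = b₂ (e j) := by
      rw [hbj]; exact hfsymm (e j)
    rw [this]
    refine repr_int edges S₁ p₁ hp₁ hmem₁ b₁ hb₁ (b₂ (e j)) ?_ i
    rw [hb₂ (e j)]
    exact hcross' _ ((e j : S₂)).2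
  -- the determinant is ±1
  choose Pz hPz using hPint
  choose Qz hQz using hQint
  have hPmat : LinearMap.toMatrix b₂ b₂ (f : (affineSpan ℝ (rootPt E V '' edges)).direction →ₗ[ℝ] (affineSpan ℝ (rootPt E V '' edges)).direction) = (Matrix.of Pz).map (Int.cast) := by
    ext i j; exact hPz i j
  have hQmat : LinearMap.toMatrix b₁ b₁ (f.symm : (affineSpan ℝ (rootPt E V '' edges)).direction →ₗ[ℝ] (affineSpan ℝ (rootPt E V '' edges)).direction) = (Matrix.of Qz).map (Int.cast) := by
    ext i j; exact hQz i j
  have hdetP : LinearMap.det (f : (affineSpan ℝ (rootPt E V '' edges)).direction →ₗ[ℝ] (affineSpan ℝ (rootPt E V '' edges)).direction) = (((Matrix.of Pz).det : ℤ) : ℝ) := by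
    rw [← LinearMap.det_toMatrix b₂, hPmat]
    rw [show ((Matrix.of Pz).map (Int.cast : ℤ → ℝ)) = (Int.castRingHom ℝ).mapMatrix (Matrix.of Pz) from rfl]
    rw [← RingHom.map_det]
    rfl
  have hdetQ : LinearMap.det (f.symm : (affineSpan ℝ (rootPt E V '' edges)).direction →ₗ[ℝ] (affineSpan ℝ (rootPt E V '' edges)).direction) = (((Matrix.of Qz).det : ℤ) : ℝ) := by
    rw [← LinearMap.det_toMatrix b₁, hQmat]
    rw [show ((Matrix.of Qz).map (Int.cast : ℤ → ℝ)) = (Int.castRingHom ℝ).mapMatrix (Matrix.of Qz) from rfl]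
    rw [← RingHom.map_det]
    rfl
  have hdet1 : LinearMap.det (f : (affineSpan ℝ (rootPt E V '' edges)).direction →ₗ[ℝ] (affineSpan ℝ (rootPt E V '' edges)).direction) * LinearMap.det (f.symm : (affineSpan ℝ (rootPt E V '' edges)).direction →ₗ[ℝ] (affineSpan ℝ (rootPt E V '' edges)).direction) = 1 := by
    rw [← LinearMap.det_comp]
    have : (f : (affineSpan ℝ (rootPt E V '' edges)).direction →ₗ[ℝ] (affineSpan ℝ (rootPt E V '' edges)).direction) ∘ₗ (f.symm : (affineSpan ℝ (rootPt E V '' edges)).direction →ₗ[ℝ] (affineSpan ℝ (rootPt E V '' edges)).direction) = LinearMap.id :=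
      LinearMap.ext fun x => f.apply_symm_apply x
    rw [this, LinearMap.det_id]
  have habs : |LinearMap.det (f : (affineSpan ℝ (rootPt E V '' edges)).direction →ₗ[ℝ] (affineSpan ℝ (rootPt E V '' edges)).direction)| = 1 := by
    rw [hdetP] at hdet1 ⊢
    rw [hdetQ] at hdet1
    have : ((Matrix.of Pz).det * (Matrix.of Qz).det : ℤ) = 1 := by
      exact_mod_cast hdet1
    have h := Int.isUnit_iff.mp (IsUnit.of_mul_eq_one _ this)
    rcases h with h | h <;> rw [h] <;> norm_num
  -- identification of the two sets as convex hulls in (affineSpan ℝ (rootPt E V '' edges)).direction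
  have hull_eq : ∀ (S : Set ((E → ℝ) × (V → ℝ))) (p : (E → ℝ) × (V → ℝ)),
      (∀ x ∈ S, x - p ∈ (affineSpan ℝ (rootPt E V '' edges)).direction) →
      Subtype.val ⁻¹' ((fun x => x - p) '' convexHull ℝ S)
        = convexHull ℝ {w : (affineSpan ℝ (rootPt E V '' edges)).direction | (w : (E → ℝ) × (V → ℝ)) ∈ (fun x => x - p) '' S} := by
    intro S p hmemS
    have hfun : ⇑((AffineEquiv.constVAdd ℝ ((E → ℝ) × (V → ℝ)) (-p)).toAffineMap)
        = fun x => x - p := by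
      funext x
      show -p +ᵥ x = x - p
      simp [sub_eq_neg_add]
    have h1 : (fun x => x - p) '' convexHull ℝ S = convexHull ℝ ((fun x => x - p) '' S) := by
      rw [← hfun, AffineMap.image_convexHull]
    have h2 : (fun x => x - p) '' S
        = Subtype.val '' {w : (affineSpan ℝ (rootPt E V '' edges)).direction | (w : (E → ℝ) × (V → ℝ)) ∈ (fun x => x - p) '' S} := by
      ext y; constructor
      · rintro ⟨x, hx, rfl⟩
        exact ⟨⟨x - p, hmemS x hx⟩, ⟨x, hx, rfl⟩, rfl⟩
      · rintro ⟨w, hw, rfl⟩; exact hw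
    have h3 : Subtype.val '' convexHull ℝ {w : (affineSpan ℝ (rootPt E V '' edges)).direction | (w : (E → ℝ) × (V → ℝ)) ∈ (fun x => x - p) '' S}
        = convexHull ℝ (Subtype.val ''
            {w : (affineSpan ℝ (rootPt E V '' edges)).direction | (w : (E → ℝ) × (V → ℝ)) ∈ (fun x => x - p) '' S}) := by
      have := AffineMap.image_convexHull ((affineSpan ℝ (rootPt E V '' edges)).direction.subtype.toAffineMap)
        {w : (affineSpan ℝ (rootPt E V '' edges)).direction | (w : (E → ℝ) × (V → ℝ)) ∈ (fun x => x - p) '' S}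
      simpa using this
    rw [h1]
    conv_lhs => rw [h2]
    rw [← h3, Set.preimage_image_eq _ Subtype.val_injective]
  have hB₁ : {w : (affineSpan ℝ (rootPt E V '' edges)).direction | (w : (E → ℝ) × (V → ℝ)) ∈ (fun x => x - p₁) '' S₁}
      = insert (0 : (affineSpan ℝ (rootPt E V '' edges)).direction) (Set.range ⇑b₁) := by
    ext w
    simp only [Set.mem_setOf_eq, Set.mem_insert_iff, Set.mem_range]
    constructor
    · rintro ⟨x, hx, hxw⟩
      by_cases hxp : x = p₁
      · left; apply Subtype.ext; rw [← hxw, hxp]; simp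
      · right
        refine ⟨⟨⟨x, hx⟩, fun h => hxp (by simpa using congrArg Subtype.val h)⟩, ?_⟩
        apply Subtype.ext; rw [hb₁, ← hxw]
    · rintro (rfl | ⟨i, rfl⟩)
      · exact ⟨p₁, hp₁, by simp⟩
      · exact ⟨(i : S₁), (i : S₁).2, (hb₁ i).symm⟩
  have hB₂ : {w : (affineSpan ℝ (rootPt E V '' edges)).direction | (w : (E → ℝ) × (V → ℝ)) ∈ (fun x => x - p₂) '' S₂}
      = insert (0 : (affineSpan ℝ (rootPt E V '' edges)).direction) (Set.range ⇑b₂) := by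
    ext w
    simp only [Set.mem_setOf_eq, Set.mem_insert_iff, Set.mem_range]
    constructor
    · rintro ⟨x, hx, hxw⟩
      by_cases hxp : x = p₂
      · left; apply Subtype.ext; rw [← hxw, hxp]; simp
      · right
        refine ⟨⟨⟨x, hx⟩, fun h => hxp (by simpa using congrArg Subtype.val h)⟩, ?_⟩
        apply Subtype.ext; rw [hb₂, ← hxw]
    · rintro (rfl | ⟨i, rfl⟩)
      · exact ⟨p₂, hp₂, by simp⟩
      · exact ⟨(i : S₂), (i : S₂).2, (hb₂ i).symm⟩
  -- f maps the second simplex onto the first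
  have himage : ⇑f '' (insert (0 : (affineSpan ℝ (rootPt E V '' edges)).direction) (Set.range ⇑b₂)) = insert (0 : (affineSpan ℝ (rootPt E V '' edges)).direction) (Set.range ⇑b₁) := by
    rw [Set.image_insert_eq, map_zero]
    congr 1
    rw [← Set.range_comp]
    have hcomp : ⇑f ∘ ⇑b₂ = ⇑b₁' := funext fun j => hf j
    rw [hcomp]
    exact b₁.range_reindex e
  have hhull : ⇑f '' convexHull ℝ (insert (0 : (affineSpan ℝ (rootPt E V '' edges)).direction) (Set.range ⇑b₂))
      = convexHull ℝ (insert (0 : (affineSpan ℝ (rootPt E V '' edges)).direction) (Set.range ⇑b₁)) := by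
    have := AffineMap.image_convexHull ((f : (affineSpan ℝ (rootPt E V '' edges)).direction →ₗ[ℝ] (affineSpan ℝ (rootPt E V '' edges)).direction).toAffineMap)
      (insert (0 : (affineSpan ℝ (rootPt E V '' edges)).direction) (Set.range ⇑b₂))
    have hco : ⇑((f : (affineSpan ℝ (rootPt E V '' edges)).direction →ₗ[ℝ] (affineSpan ℝ (rootPt E V '' edges)).direction).toAffineMap) = ⇑f := rfl
    rw [hco] at this
    rw [this, himage]
  -- final computation
  rw [hull_eq S₁ p₁ hmem₁, hull_eq S₂ p₂ hmem₂, hB₁, hB₂]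
  calc μ ((convexHull ℝ) (insert (0 : (affineSpan ℝ (rootPt E V '' edges)).direction) (Set.range ⇑b₁)))
      = μ (⇑f '' (convexHull ℝ) (insert (0 : (affineSpan ℝ (rootPt E V '' edges)).direction) (Set.range ⇑b₂))) := by
        rw [hhull]
    _ = ENNReal.ofReal |LinearMap.det (f : (affineSpan ℝ (rootPt E V '' edges)).direction →ₗ[ℝ] (affineSpan ℝ (rootPt E V '' edges)).direction)| *
        μ ((convexHull ℝ) (insert (0 : (affineSpan ℝ (rootPt E V '' edges)).direction) (Set.range ⇑b₂))) :=
        Measure.addHaar_image_linearMap μ _ _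
    _ = μ ((convexHull ℝ) (insert (0 : (affineSpan ℝ (rootPt E V '' edges)).direction) (Set.range ⇑b₂))) := by
        rw [habs]; simp
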